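/- Let γ ≥ 1, σ > 0, β := 2 + α_- with -1 < α < 1 and α_- = min(α, 0), and suppose γ > β/σ. For a mesh with k_1 ≤ C·k^γ and k_j ≤ C·k·t_j^{1-1/γ} for j ≥ 2, the sum S = Σ_{j=2}^n k_j^β·∫_{t_{j-1}}^{t_j} t^{σ-3-α_-} dt satisfies S ≤ C'·k^β·t_n^{σ - β/γ} for some constant C' depending only on C, γ, σ, α, provided σ - β/γ > 0. -/

import Mathlib

theorem stmt13 (γ σ α C : ℝ) (hγ : 1 ≤ γ) (hσ : 0 < σ) (hα : -1 < α) (hα' : α < 1)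
    (hC : 1 ≤ C) (hγβ : γ > (2 + min α 0) / σ) :
    ∃ C' > 0, ∀ (n : ℕ) (t : ℕ → ℝ) (k : ℝ), 0 < k → 2 ≤ n →
      t 0 = 0 → (∀ j : ℕ, 1 ≤ j → j ≤ n → t (j - 1) < t j) →
      (∀ j : ℕ, 1 ≤ j → j ≤ n → t j - t (j - 1) ≤ k) →
      t 1 ≤ C * k ^ γ →
      (∀ j : ℕ, 2 ≤ j → j ≤ n → t j - t (j - 1) ≤ C * k * (t j) ^ (1 - 1/γ)) →
      (∀ j : ℕ, 2 ≤ j → j ≤ n → t j ≤ C * t (j - 1)) →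
      ∑ j ∈ Finset.Icc 2 n,
          (t j - t (j - 1)) ^ (2 + min α 0)
            * ∫ s in (t (j - 1))..(t j), s ^ (σ - 3 - min α 0)
        ≤ C' * k ^ (2 + min α 0) * (t n) ^ (σ - (2 + min α 0) / γ) := by
  set β : ℝ := 2 + min α 0 with hβ
  have hγ0 : (0:ℝ) < γ := lt_of_lt_of_le one_pos hγ
  have hβ1 : 1 < β := by
    have hm : -1 < min α 0 := lt_min hα (by norm_num)
    simp only [hβ]; linarith
  have hβpos : 0 < β := by linarith
  have hσβ : 0 < σ - β / γ := by
    have h1 : β / σ < γ := hγβ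
    have h2 : β < γ * σ := by
      have := (div_lt_iff₀ hσ).mp h1
      linarith
    have : β / γ < σ := by
      rw [div_lt_iff₀ hγ0]; linarith
    linarith
  have hp : (-1:ℝ) < σ - 1 - β / γ := by linarith
  have hCpos : (0:ℝ) < C := lt_of_lt_of_le one_pos hC
  refine ⟨C ^ β * C ^ β / (σ - β / γ), by positivity, ?_⟩
  intro n t k hk hn ht0 hlt hdk ht1 hmesh hquasi
  -- positivity of mesh points
  have htpos : ∀ j, 1 ≤ j → j ≤ n → 0 < t j := by
    intro j hj1 hjn
    induction j with
    | zero => omega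
    | succ i ih =>
      rcases Nat.eq_zero_or_pos i with hi | hi
      · subst hi
        have := hlt 1 le_rfl (by omega)
        simpa [ht0] using this
      · have h1 : 0 < t i := ih hi (by omega)
        have h2 := hlt (i + 1) (by omega) hjn
        simp only [Nat.add_sub_cancel] at h2
        linarith
  -- the comparison function
  set p : ℝ := σ - 1 - β / γ with hpdef
  have hgint : ∀ a b : ℝ, IntervalIntegrable (fun s => s ^ p) MeasureTheory.volume a b :=
    fun a b => intervalIntegral.intervalIntegrable_rpow' hp
  -- integrability of the original integrand on positive intervals
  have hfint : ∀ a b : ℝ, 0 < a → 0 < b →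
      IntervalIntegrable (fun s => s ^ (σ - 3 - min α 0)) MeasureTheory.volume a b := by
    intro a b ha hb
    apply ContinuousOn.intervalIntegrable
    intro x hx
    have hx0 : x ≠ 0 := by
      have h1 : min a b ≤ x := by
        rcases Set.mem_uIcc.mp hx with ⟨h1, _⟩ | ⟨h1, _⟩
        · exact le_trans (min_le_left _ _) h1
        · exact le_trans (min_le_right _ _) h1
      exact (lt_of_lt_of_le (lt_min ha hb) h1).ne'
    exact (Real.continuousAt_rpow_const x _ (Or.inl hx0)).continuousWithinAt
  -- termwise bound
  have hterm : ∀ j ∈ Finset.Icc 2 n,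
      (t j - t (j - 1)) ^ β * ∫ s in (t (j - 1))..(t j), s ^ (σ - 3 - min α 0)
        ≤ C ^ β * C ^ β * k ^ β * ∫ s in (t (j - 1))..(t j), s ^ p := by
    intro j hj
    rw [Finset.mem_Icc] at hj
    obtain ⟨hj2, hjn⟩ := hj
    have hj1 : 1 ≤ j - 1 := by omega
    have hjm : j - 1 ≤ n := by omega
    have ha : 0 < t (j - 1) := htpos _ hj1 hjm
    have hb : 0 < t j := htpos _ (by omega) hjn
    have hab : t (j - 1) ≤ t j := (hlt j (by omega) hjn).le
    have hkj0 : 0 ≤ t j - t (j - 1) := by linarith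
    set e : ℝ := (1 - 1/γ) * β with hedef
    have he0 : 0 ≤ e := by
      have : 1/γ ≤ 1 := by
        rw [div_le_one hγ0]; exact hγ
      have h1 : 0 ≤ 1 - 1/γ := by linarith
      positivity
    have heβ : e ≤ β := by
      have h1 : 1 - 1/γ ≤ 1 := by
        have : 0 < 1/γ := by positivity
        linarith
      calc e ≤ 1 * β := by
              rw [hedef]; exact mul_le_mul_of_nonneg_right h1 hβpos.le
        _ = β := one_mul β
    -- step 1: (k_j)^β ≤ C^β k^β (t j)^e
    have hstep1 : (t j - t (j - 1)) ^ β ≤ C ^ β * k ^ β * (t j) ^ e := by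
      have h1 := hmesh j hj2 hjn
      have h2 : (t j - t (j - 1)) ^ β ≤ (C * k * (t j) ^ (1 - 1/γ)) ^ β :=
        Real.rpow_le_rpow hkj0 h1 hβpos.le
      calc (t j - t (j - 1)) ^ β ≤ (C * k * (t j) ^ (1 - 1/γ)) ^ β := h2
        _ = C ^ β * k ^ β * (t j) ^ e := by
            rw [Real.mul_rpow (by positivity) (by positivity),
                Real.mul_rpow hCpos.le hk.le, ← Real.rpow_mul hb.le]
    -- nonnegativity of the integral
    have hInn : 0 ≤ ∫ s in (t (j - 1))..(t j), s ^ (σ - 3 - min α 0) := by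
      apply intervalIntegral.integral_nonneg hab
      intro x hx
      exact Real.rpow_nonneg (le_trans ha.le hx.1) _
    -- step 2
    have hstep2 : (t j) ^ e * ∫ s in (t (j - 1))..(t j), s ^ (σ - 3 - min α 0)
        ≤ C ^ β * ∫ s in (t (j - 1))..(t j), s ^ p := by
      rw [← intervalIntegral.integral_const_mul, ← intervalIntegral.integral_const_mul]
      apply intervalIntegral.integral_mono_on hab
        ((hfint _ _ ha hb).const_mul _) ((hgint _ _).const_mul _)
      intro x hx
      have hx0 : 0 < x := lt_of_lt_of_le ha hx.1
      have htjx : t j ≤ C * x := le_trans (hquasi j hj2 hjn)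
        (mul_le_mul_of_nonneg_left hx.1 hCpos.le)
      have hq : 0 ≤ x ^ (σ - 3 - min α 0) := Real.rpow_nonneg hx0.le _
      calc (t j) ^ e * x ^ (σ - 3 - min α 0)
          ≤ (C * x) ^ e * x ^ (σ - 3 - min α 0) :=
            mul_le_mul_of_nonneg_right (Real.rpow_le_rpow hb.le htjx he0) hq
        _ = C ^ e * (x ^ e * x ^ (σ - 3 - min α 0)) := by
            rw [Real.mul_rpow hCpos.le hx0.le]; ring
        _ ≤ C ^ β * (x ^ e * x ^ (σ - 3 - min α 0)) := by
            apply mul_le_mul_of_nonneg_right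
              (Real.rpow_le_rpow_of_exponent_le hC heβ)
            positivity
        _ = C ^ β * x ^ p := by
            rw [← Real.rpow_add hx0]
            congr 1
            rw [hpdef, hedef, hβ]
            field_simp
            ring_nf
    calc (t j - t (j - 1)) ^ β * ∫ s in (t (j - 1))..(t j), s ^ (σ - 3 - min α 0)
        ≤ (C ^ β * k ^ β * (t j) ^ e) * ∫ s in (t (j - 1))..(t j), s ^ (σ - 3 - min α 0) :=
          mul_le_mul_of_nonneg_right hstep1 hInn
      _ = (C ^ β * k ^ β) * ((t j) ^ e * ∫ s in (t (j - 1))..(t j), s ^ (σ - 3 - min α 0)) := by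
          ring
      _ ≤ (C ^ β * k ^ β) * (C ^ β * ∫ s in (t (j - 1))..(t j), s ^ p) :=
          mul_le_mul_of_nonneg_left hstep2 (by positivity)
      _ = C ^ β * C ^ β * k ^ β * ∫ s in (t (j - 1))..(t j), s ^ p := by ring
  -- sum the telescoping integrals
  have ht1 : 0 < t 1 := htpos 1 le_rfl (by omega)
  have htn : 0 < t n := htpos n (by omega) le_rfl
  have hsum : ∑ j ∈ Finset.Icc 2 n, ∫ s in (t (j - 1))..(t j), s ^ p
      = ∫ s in (t 1)..(t n), s ^ p := by
    have h1 : ∑ j ∈ Finset.Icc 2 n, ∫ s in (t (j - 1))..(t j), s ^ p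
        = ∑ i ∈ Finset.range (n - 1), ∫ s in (t (i + 1))..(t (i + 1 + 1)), s ^ p := by
      rw [show Finset.Icc 2 n = Finset.Ico 2 (n + 1) by rw [Finset.Ico_add_one_right_eq_Icc],
        Finset.sum_Ico_eq_sum_range]
      apply Finset.sum_congr (by rw [show n + 1 - 2 = n - 1 by omega])
      intro i _
      congr 2 <;> omega
    rw [h1, intervalIntegral.sum_integral_adjacent_intervals
      (a := fun i => t (i + 1)) (fun i _ => hgint _ _)]
    congr 2
    omega
  have hint0 : ∫ s in (0:ℝ)..(t n), s ^ p = (t n) ^ (σ - β / γ) / (σ - β / γ) := by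
    rw [integral_rpow (Or.inl hp)]
    have : p + 1 = σ - β / γ := by rw [hpdef]; ring
    rw [this, Real.zero_rpow (by linarith)]
    ring
  have htail : ∫ s in (t 1)..(t n), s ^ p ≤ (t n) ^ (σ - β / γ) / (σ - β / γ) := by
    have hadd := intervalIntegral.integral_add_adjacent_intervals
      (hgint 0 (t 1)) (hgint (t 1) (t n))
    have h0 : 0 ≤ ∫ s in (0:ℝ)..(t 1), s ^ p := by
      apply intervalIntegral.integral_nonneg ht1.le
      intro x hx
      exact Real.rpow_nonneg hx.1 _
    rw [hint0] at hadd
    linarith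
  calc ∑ j ∈ Finset.Icc 2 n,
        (t j - t (j - 1)) ^ β * ∫ s in (t (j - 1))..(t j), s ^ (σ - 3 - min α 0)
      ≤ ∑ j ∈ Finset.Icc 2 n, C ^ β * C ^ β * k ^ β * ∫ s in (t (j - 1))..(t j), s ^ p :=
        Finset.sum_le_sum hterm
    _ = C ^ β * C ^ β * k ^ β * ∫ s in (t 1)..(t n), s ^ p := by
        rw [← Finset.mul_sum, hsum]
    _ ≤ C ^ β * C ^ β * k ^ β * ((t n) ^ (σ - β / γ) / (σ - β / γ)) := by
        apply mul_le_mul_of_nonneg_left htail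
        positivity
    _ = C ^ β * C ^ β / (σ - β / γ) * k ^ β * (t n) ^ (σ - β / γ) := by ring
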